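/- Let G be a connected (P5, K5-e)-free graph and let t ≥ 1. Suppose ω(G) ≥ t+3 and G contains no induced copy of H_t, where H_t is the graph obtained from K_{t+3} by adding a new vertex adjacent to exactly two vertices of the K_{t+3}. Then either G is the complement of a bipartite graph or G has a clique cut-set. -/

import Mathlib

open SimpleGraph

/-- The complete graph on 5 vertices minus one edge. -/
def K5e : SimpleGraph (Fin 5) := (⊤ : SimpleGraph (Fin 5)).deleteEdges {s(0, 1)}

/-- `H` has an induced copy in `G`. -/
def HasInducedCopy {W V : Type*} (H : SimpleGraph W) (G : SimpleGraph V) : Prop :=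
  ∃ f : W ↪ V, ∀ a b : W, G.Adj (f a) (f b) ↔ H.Adj a b

/-- `G` contains no induced subgraph isomorphic to `H`. -/
def IsInducedFree {V W : Type*} (G : SimpleGraph V) (H : SimpleGraph W) : Prop :=
  ¬ HasInducedCopy H G

/-- `Hgraph t` is the graph obtained from `K_{t+3}` (on the first `t+3` vertices) by adding a
new vertex (the last one) adjacent to exactly two vertices of the `K_{t+3}`. -/
def Hgraph (t : ℕ) : SimpleGraph (Fin (t + 4)) :=
  SimpleGraph.fromRel (fun a b =>
    (a.val < t + 3 ∧ b.val < t + 3) ∨ (a.val = t + 3 ∧ b.val < 2))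

/-- `G` is the complement of a bipartite graph: its vertex set can be partitioned into two
(possibly empty) cliques. -/
def IsCompBipartite {V : Type*} (G : SimpleGraph V) : Prop :=
  ∃ A B : Set V, A ∪ B = Set.univ ∧ G.IsClique A ∧ G.IsClique B

/-- `G` has a clique cut-set: a clique whose removal disconnects the graph. -/
def HasCliqueCutset {V : Type*} (G : SimpleGraph V) : Prop :=
  ∃ K A B : Set V, G.IsClique K ∧ A.Nonempty ∧ B.Nonempty ∧
    Disjoint A B ∧ Disjoint K A ∧ Disjoint K B ∧ K ∪ A ∪ B = Set.univ ∧
    ∀ a ∈ A, ∀ b ∈ B, ¬ G.Adj a b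

/-! ### Auxiliary machinery -/

section AuxLemmas

variable {V : Type*} {G : SimpleGraph V}

lemma p5_aux (hP5 : IsInducedFree G (pathGraph 5)) {p1 p2 p3 p4 p5 : V}
    (a12 : G.Adj p1 p2) (a23 : G.Adj p2 p3) (a34 : G.Adj p3 p4) (a45 : G.Adj p4 p5)
    (n13 : ¬G.Adj p1 p3) (n14 : ¬G.Adj p1 p4) (n15 : ¬G.Adj p1 p5)
    (n24 : ¬G.Adj p2 p4) (n25 : ¬G.Adj p2 p5) (n35 : ¬G.Adj p3 p5)
    (d13 : p1 ≠ p3) (d14 : p1 ≠ p4) (d15 : p1 ≠ p5) (d24 : p2 ≠ p4) (d25 : p2 ≠ p5)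
    (d35 : p3 ≠ p5) : False := by
  have d12 := a12.ne; have d23 := a23.ne; have d34 := a34.ne; have d45 := a45.ne
  apply hP5
  refine ⟨⟨![p1,p2,p3,p4,p5], ?_⟩, ?_⟩
  · intro i j h
    fin_cases i <;> fin_cases j <;> simp_all
  · intro i j
    show G.Adj (![p1,p2,p3,p4,p5] i) (![p1,p2,p3,p4,p5] j) ↔ _
    have s12 := a12.symm; have s23 := a23.symm; have s34 := a34.symm; have s45 := a45.symm
    have m13 : ¬G.Adj p3 p1 := fun h => n13 h.symm
    have m14 : ¬G.Adj p4 p1 := fun h => n14 h.symm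
    have m15 : ¬G.Adj p5 p1 := fun h => n15 h.symm
    have m24 : ¬G.Adj p4 p2 := fun h => n24 h.symm
    have m25 : ¬G.Adj p5 p2 := fun h => n25 h.symm
    have m35 : ¬G.Adj p5 p3 := fun h => n35 h.symm
    fin_cases i <;> fin_cases j <;>
      simp_all [pathGraph_adj, SimpleGraph.irrefl, Function.Embedding.coeFn_mk] <;> decide

lemma k5e_aux (hK : IsInducedFree G K5e) {v d x y z : V}
    (hvd : ¬G.Adj v d) (dvd : v ≠ d)
    (avx : G.Adj v x) (avy : G.Adj v y) (avz : G.Adj v z)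
    (adx : G.Adj d x) (ady : G.Adj d y) (adz : G.Adj d z)
    (axy : G.Adj x y) (axz : G.Adj x z) (ayz : G.Adj y z) : False := by
  have h1 := avx.ne; have h2 := avy.ne; have h3 := avz.ne
  have h4 := adx.ne; have h5 := ady.ne; have h6 := adz.ne
  have h7 := axy.ne; have h8 := axz.ne; have h9 := ayz.ne
  apply hK
  refine ⟨⟨![v,d,x,y,z], ?_⟩, ?_⟩
  · intro i j h
    fin_cases i <;> fin_cases j <;> simp_all
  · intro i j
    show G.Adj (![v,d,x,y,z] i) (![v,d,x,y,z] j) ↔ _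
    have s1 := avx.symm; have s2 := avy.symm; have s3 := avz.symm
    have s4 := adx.symm; have s5 := ady.symm; have s6 := adz.symm
    have s7 := axy.symm; have s8 := axz.symm; have s9 := ayz.symm
    have m : ¬G.Adj d v := fun h => hvd h.symm
    fin_cases i <;> fin_cases j <;>
      simp_all [K5e, SimpleGraph.irrefl, Sym2.eq, Sym2.rel_iff', Function.Embedding.coeFn_mk]

lemma hgraph_adj {t : ℕ} {i j : Fin (t+4)} :
    (Hgraph t).Adj i j ↔ i.val ≠ j.val ∧
      ((i.val < t + 3 ∧ j.val < t + 3) ∨ (i.val = t + 3 ∧ j.val < 2) ∨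
        (j.val = t + 3 ∧ i.val < 2)) := by
  simp only [Hgraph, SimpleGraph.fromRel_adj, ne_eq, Fin.ext_iff]
  tauto

lemma ht_aux {t : ℕ} (hHt : IsInducedFree G (Hgraph t)) (s : Finset V)
    (hs : G.IsClique ↑s) (hcard : s.card = t + 3) {a b v : V}
    (ha : a ∈ s) (hb : b ∈ s) (hab : a ≠ b) (hv : v ∉ s)
    (hva : G.Adj v a) (hvb : G.Adj v b)
    (hother : ∀ w ∈ s, w ≠ a → w ≠ b → ¬G.Adj v w) : False := by
  classical
  set u : Finset V := (s.erase a).erase b with hu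
  have hbu : b ∈ s.erase a := Finset.mem_erase.2 ⟨hab.symm, hb⟩
  have hucard : u.card = t + 1 := by
    rw [hu, Finset.card_erase_of_mem hbu, Finset.card_erase_of_mem ha, hcard]; omega
  have husub : u ⊆ s := (Finset.erase_subset _ _).trans (Finset.erase_subset _ _)
  have hau : a ∉ u := by simp [hu]
  have hbu' : b ∉ u := by simp [hu]
  have hvu : v ∉ u := fun h => hv (husub h)
  let e : Fin (t+1) → V := fun i => (u.equivFin.symm (Fin.cast hucard.symm i) : V)
  have he_mem : ∀ i, e i ∈ u := fun i => (u.equivFin.symm _).2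
  have he_inj : Function.Injective e := by
    intro i j h
    have h2 := u.equivFin.symm.injective (Subtype.ext (p := fun x => x ∈ u) h)
    simpa [Fin.ext_iff] using congrArg Fin.val h2
  have hea : ∀ x, e x ≠ a := fun x hh => hau (hh ▸ he_mem x)
  have heb : ∀ x, e x ≠ b := fun x hh => hbu' (hh ▸ he_mem x)
  have hev : ∀ x, e x ≠ v := fun x hh => hvu (hh ▸ he_mem x)
  have hnv : ∀ x, ¬G.Adj v (e x) :=
    fun x => hother (e x) (husub (he_mem x)) (hea x) (heb x)
  have hee : ∀ (x y : Fin (t+1)), x ≠ y → G.Adj (e x) (e y) :=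
    fun x y hxy => hs (husub (he_mem x)) (husub (he_mem y)) (fun hh => hxy (he_inj hh))
  let g : Fin (t+4) → V := fun i =>
    if i.val = 0 then a else if i.val = 1 then b
    else if h : i.val = t + 3 then v
    else e ⟨i.val - 2, by have := i.isLt; omega⟩
  have hg0 : ∀ i : Fin (t+4), i.val = 0 → g i = a := by intro i h; simp only [g]; rw [if_pos h]
  have hg1 : ∀ i : Fin (t+4), i.val = 1 → g i = b := by intro i h; simp only [g]; rw [if_neg (by omega), if_pos h]
  have hgv : ∀ i : Fin (t+4), i.val = t + 3 → g i = v := by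
    intro i h; simp only [g]
    rw [if_neg (by omega), if_neg (by omega), dif_pos h]
  have hge : ∀ (i : Fin (t+4)) (h1 : 2 ≤ i.val) (h2 : i.val < t + 3),
      g i = e ⟨i.val - 2, by omega⟩ := by
    intro i h1 h2
    simp only [g]
    rw [if_neg (by omega), if_neg (by omega), dif_neg (by omega)]
  have hcases : ∀ i : Fin (t+4), i.val = 0 ∨ i.val = 1 ∨ i.val = t + 3 ∨
      (2 ≤ i.val ∧ i.val < t + 3) := by
    intro i; have := i.isLt; omega
  have hinj : Function.Injective g := by
    intro i j hij
    apply Fin.ext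
    rcases hcases i with h0 | h1 | h3 | ⟨h2a, h2b⟩ <;>
      rcases hcases j with k0 | k1 | k3 | ⟨k2a, k2b⟩
    · omega
    · rw [hg0 i h0, hg1 j k1] at hij; exact absurd hij hab
    · rw [hg0 i h0, hgv j k3] at hij; exact absurd (hij ▸ ha) hv
    · rw [hg0 i h0, hge j k2a k2b] at hij; exact absurd hij.symm (hea _)
    · rw [hg1 i h1, hg0 j k0] at hij; exact absurd hij.symm hab
    · omega
    · rw [hg1 i h1, hgv j k3] at hij; exact absurd (hij ▸ hb) hv
    · rw [hg1 i h1, hge j k2a k2b] at hij; exact absurd hij.symm (heb _)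
    · rw [hgv i h3, hg0 j k0] at hij; exact absurd (hij.symm ▸ ha) hv
    · rw [hgv i h3, hg1 j k1] at hij; exact absurd (hij.symm ▸ hb) hv
    · omega
    · rw [hgv i h3, hge j k2a k2b] at hij; exact absurd hij.symm (hev _)
    · rw [hge i h2a h2b, hg0 j k0] at hij; exact absurd hij (hea _)
    · rw [hge i h2a h2b, hg1 j k1] at hij; exact absurd hij (heb _)
    · rw [hge i h2a h2b, hgv j k3] at hij; exact absurd hij (hev _)
    · rw [hge i h2a h2b, hge j k2a k2b] at hij
      have h4 := congrArg Fin.val (he_inj hij)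
      simp only at h4
      omega
  apply hHt
  refine ⟨⟨g, hinj⟩, ?_⟩
  intro i j
  show G.Adj (g i) (g j) ↔ _
  rw [hgraph_adj]
  rcases hcases i with h0 | h1 | h3 | ⟨h2a, h2b⟩ <;>
    rcases hcases j with k0 | k1 | k3 | ⟨k2a, k2b⟩
  · rw [hg0 i h0, hg0 j k0]; exact iff_of_false (G.irrefl) (by omega)
  · rw [hg0 i h0, hg1 j k1]; exact iff_of_true (hs ha hb hab) (by omega)
  · rw [hg0 i h0, hgv j k3]; exact iff_of_true hva.symm (by omega)
  · rw [hg0 i h0, hge j k2a k2b]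
    exact iff_of_true (hs ha (husub (he_mem _)) (fun hh => hea _ hh.symm)) (by omega)
  · rw [hg1 i h1, hg0 j k0]; exact iff_of_true (hs hb ha hab.symm) (by omega)
  · rw [hg1 i h1, hg1 j k1]; exact iff_of_false (G.irrefl) (by omega)
  · rw [hg1 i h1, hgv j k3]; exact iff_of_true hvb.symm (by omega)
  · rw [hg1 i h1, hge j k2a k2b]
    exact iff_of_true (hs hb (husub (he_mem _)) (fun hh => heb _ hh.symm)) (by omega)
  · rw [hgv i h3, hg0 j k0]; exact iff_of_true hva (by omega)
  · rw [hgv i h3, hg1 j k1]; exact iff_of_true hvb (by omega)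
  · rw [hgv i h3, hgv j k3]; exact iff_of_false (G.irrefl) (by omega)
  · rw [hgv i h3, hge j k2a k2b]; exact iff_of_false (hnv _) (by omega)
  · rw [hge i h2a h2b, hg0 j k0]
    exact iff_of_true (hs (husub (he_mem _)) ha (hea _)) (by omega)
  · rw [hge i h2a h2b, hg1 j k1]
    exact iff_of_true (hs (husub (he_mem _)) hb (heb _)) (by omega)
  · rw [hge i h2a h2b, hgv j k3]
    exact iff_of_false (fun hh => hnv _ hh.symm) (by omega)
  · rw [hge i h2a h2b, hge j k2a k2b]
    constructor
    · intro hadj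
      have hne : i.val - 2 ≠ j.val - 2 := by
        intro hh
        exact hadj.ne (by congr 1; exact Fin.ext hh)
      exact ⟨by omega, Or.inl ⟨h2b, k2b⟩⟩
    · rintro ⟨hne, -⟩
      exact hee _ _ (by intro hh; have := congrArg Fin.val hh; simp only at this; omega)

end AuxLemmas

section Reach

variable {V : Type*}

/-- Chains of length `n` staying outside `M`. -/
def ChainO (G : SimpleGraph V) (M : Finset V) : ℕ → V → V → Prop
  | 0, x, y => x = y
  | n+1, x, y => ∃ c, x ∉ M ∧ c ∉ M ∧ G.Adj x c ∧ ChainO G M n c y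

/-- Reachability outside `M`. -/
def ReachO (G : SimpleGraph V) (M : Finset V) (x y : V) : Prop := ∃ n, ChainO G M n x y

variable {G : SimpleGraph V} {M : Finset V}

lemma reachO_refl (x : V) : ReachO G M x x := ⟨0, rfl⟩

lemma chainO_out : ∀ (n : ℕ) (x y : V), x ∉ M → ChainO G M n x y → y ∉ M := by
  intro n
  induction n with
  | zero => intro x y hx h; exact h ▸ hx
  | succ n ih => rintro x y hx ⟨c, -, hc, -, hch⟩; exact ih c y hc hch

lemma reachO_out {x y : V} (hx : x ∉ M) (h : ReachO G M x y) : y ∉ M := by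
  obtain ⟨n, h⟩ := h; exact chainO_out n x y hx h

lemma chainO_append : ∀ (m : ℕ) (x y z : V), ChainO G M m x y → ReachO G M y z →
    ReachO G M x z := by
  intro m
  induction m with
  | zero => intro x y z h hr; exact h ▸ hr
  | succ m ih =>
    rintro x y z ⟨c, hx, hc, hadj, hch⟩ hr
    obtain ⟨n, hn⟩ := ih c y z hch hr
    exact ⟨n+1, c, hx, hc, hadj, hn⟩

lemma reachO_trans {x y z : V} (h1 : ReachO G M x y) (h2 : ReachO G M y z) :
    ReachO G M x z := by
  obtain ⟨m, hm⟩ := h1; exact chainO_append m x y z hm h2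

lemma chainO_snoc : ∀ (n : ℕ) (x y z : V), ChainO G M n x y → y ∉ M → z ∉ M →
    G.Adj y z → ChainO G M (n+1) x z := by
  intro n
  induction n with
  | zero => intro x y z h hy hz hadj; exact h ▸ ⟨z, h ▸ hy, hz, h ▸ hadj, rfl⟩
  | succ n ih =>
    rintro x y z ⟨c, hx, hc, hadj, hch⟩ hy hz hadj2
    exact ⟨c, hx, hc, hadj, ih c y z hch hy hz hadj2⟩

lemma reachO_symm {x y : V} (h : ReachO G M x y) : ReachO G M y x := by
  obtain ⟨n, hn⟩ := h
  refine ⟨n, ?_⟩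
  induction n generalizing x with
  | zero => exact hn.symm
  | succ n ih =>
    obtain ⟨c, hx, hc, hadj, hch⟩ := hn
    exact chainO_snoc n y c x (ih hch) hc hx hadj.symm

lemma reachO_head {x c w : V} (hx : x ∉ M) (hc : c ∉ M) (hadj : G.Adj x c)
    (h : ReachO G M c w) : ReachO G M x w := by
  obtain ⟨n, hn⟩ := h; exact ⟨n+1, c, hx, hc, hadj, hn⟩

lemma reachO_tail {x a b : V} (hx : x ∉ M) (h : ReachO G M x a) (hb : b ∉ M)
    (hadj : G.Adj a b) : ReachO G M x b :=
  reachO_trans h ⟨1, b, reachO_out hx h, hb, hadj, rfl⟩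

lemma pick_z (hA : ∀ v ∉ M, ∀ x ∈ M, ∀ y ∈ M, G.Adj v x → G.Adj v y → x = y)
    (hM4 : 4 ≤ M.card) {p1 p2 y : V} (hp1 : p1 ∉ M) (hp2 : p2 ∉ M) :
    ∃ z ∈ M, z ≠ y ∧ ¬G.Adj p1 z ∧ ¬G.Adj p2 z := by
  classical
  set F : Finset V := M.filter (fun z => z = y ∨ G.Adj p1 z ∨ G.Adj p2 z) with hF
  have hsub : F ⊆ insert y ((M.filter (G.Adj p1)) ∪ (M.filter (G.Adj p2))) := by
    intro z hz
    rw [hF, Finset.mem_filter] at hz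
    rcases hz.2 with h | h | h
    · exact Finset.mem_insert.2 (Or.inl h)
    · exact Finset.mem_insert.2 (Or.inr (Finset.mem_union_left _ (Finset.mem_filter.2 ⟨hz.1, h⟩)))
    · exact Finset.mem_insert.2 (Or.inr (Finset.mem_union_right _ (Finset.mem_filter.2 ⟨hz.1, h⟩)))
  have hcard1 : (M.filter (G.Adj p1)).card ≤ 1 := by
    rw [Finset.card_le_one]
    intro x hx y' hy'
    rw [Finset.mem_filter] at hx hy'
    exact hA p1 hp1 x hx.1 y' hy'.1 hx.2 hy'.2
  have hcard2 : (M.filter (G.Adj p2)).card ≤ 1 := by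
    rw [Finset.card_le_one]
    intro x hx y' hy'
    rw [Finset.mem_filter] at hx hy'
    exact hA p2 hp2 x hx.1 y' hy'.1 hx.2 hy'.2
  have hFcard : F.card ≤ 3 := by
    have h1 := Finset.card_le_card hsub
    have h2 := Finset.card_insert_le y ((M.filter (G.Adj p1)) ∪ (M.filter (G.Adj p2)))
    have h3 := Finset.card_union_le (M.filter (G.Adj p1)) (M.filter (G.Adj p2))
    omega
  have hne : (M \ F).Nonempty := by
    rw [← Finset.card_pos, Finset.card_sdiff_of_subset (Finset.filter_subset _ _), ← hF]
    omega
  obtain ⟨z, hz⟩ := hne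
  rw [Finset.mem_sdiff, hF, Finset.mem_filter] at hz
  push_neg at hz
  exact ⟨z, hz.1, (hz.2 hz.1).1, (hz.2 hz.1).2.1, (hz.2 hz.1).2.2⟩

lemma pick_z2 (hA : ∀ v ∉ M, ∀ x ∈ M, ∀ y ∈ M, G.Adj v x → G.Adj v y → x = y)
    (hM4 : 4 ≤ M.card) {p1 y1 y2 : V} (hp1 : p1 ∉ M) :
    ∃ z ∈ M, z ≠ y1 ∧ z ≠ y2 ∧ ¬G.Adj p1 z := by
  classical
  set F : Finset V := M.filter (fun z => z = y1 ∨ z = y2 ∨ G.Adj p1 z) with hF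
  have hsub : F ⊆ insert y1 (insert y2 (M.filter (G.Adj p1))) := by
    intro z hz
    rw [hF, Finset.mem_filter] at hz
    rcases hz.2 with h | h | h
    · exact Finset.mem_insert.2 (Or.inl h)
    · exact Finset.mem_insert.2 (Or.inr (Finset.mem_insert.2 (Or.inl h)))
    · exact Finset.mem_insert.2 (Or.inr (Finset.mem_insert.2
        (Or.inr (Finset.mem_filter.2 ⟨hz.1, h⟩))))
  have hcard1 : (M.filter (G.Adj p1)).card ≤ 1 := by
    rw [Finset.card_le_one]
    intro x hx y' hy'
    rw [Finset.mem_filter] at hx hy'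
    exact hA p1 hp1 x hx.1 y' hy'.1 hx.2 hy'.2
  have hFcard : F.card ≤ 3 := by
    have h1 := Finset.card_le_card hsub
    have h2 := Finset.card_insert_le y1 (insert y2 (M.filter (G.Adj p1)))
    have h3 := Finset.card_insert_le y2 (M.filter (G.Adj p1))
    omega
  have hne : (M \ F).Nonempty := by
    rw [← Finset.card_pos, Finset.card_sdiff_of_subset (Finset.filter_subset _ _), ← hF]
    omega
  obtain ⟨z, hz⟩ := hne
  rw [Finset.mem_sdiff, hF, Finset.mem_filter] at hz
  push_neg at hz
  exact ⟨z, hz.1, (hz.2 hz.1).1, (hz.2 hz.1).2.1, (hz.2 hz.1).2.2⟩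

lemma extractP3 : ∀ (n : ℕ) (u v : V), ChainO G M n u v → v ∉ M → u ≠ v → ¬G.Adj u v →
    ∃ a q b, a ∉ M ∧ q ∉ M ∧ b ∉ M ∧ G.Adj a q ∧ G.Adj q b ∧ ¬G.Adj a b ∧ a ≠ b := by
  intro n
  induction n with
  | zero => intro u v h hv hne _; exact absurd h hne
  | succ n ih =>
    rintro u v ⟨s, hu, hs, hadj, hch⟩ hv hne hnadj
    by_cases hsv : s = v
    · exact absurd (hsv ▸ hadj) hnadj
    · by_cases hsa : G.Adj s v
      · exact ⟨u, s, v, hu, hs, hv, hadj, hsa, hnadj, hne⟩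
      · exact ih s v hch hv hsv hsa

end Reach

section MainLemmas

variable {V : Type*} {G : SimpleGraph V} {M : Finset V}

/-- Every vertex outside a maximum clique has at most one neighbour in it. -/
lemma lemA [Fintype V] (hK5e : IsInducedFree G K5e) {t : ℕ}
    (hHt : IsInducedFree G (Hgraph t))
    (hM : G.IsNClique G.cliqueNum M) (hw : t + 3 ≤ G.cliqueNum) :
    ∀ v ∉ M, ∀ x ∈ M, ∀ y ∈ M, G.Adj v x → G.Adj v y → x = y := by
  classical
  intro v hv x hx y hy hvx hvy
  by_contra hxy
  have hMadj : ∀ x' ∈ M, ∀ y' ∈ M, x' ≠ y' → G.Adj x' y' := fun x' hx' y' hy' hne =>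
    hM.1 (Finset.mem_coe.mpr hx') (Finset.mem_coe.mpr hy') hne
  have hd : ∃ d ∈ M, ¬G.Adj v d := by
    by_contra hall
    push_neg at hall
    have hclique : G.IsClique ↑(insert v M) := by
      rw [Finset.coe_insert]
      exact hM.1.insert (fun b hb _ => hall b hb)
    have hcard : (insert v M).card = G.cliqueNum + 1 := by
      rw [Finset.card_insert_of_notMem hv, hM.2]
    have h2 := SimpleGraph.IsClique.card_le_cliqueNum (tc := hclique)
    omega
  obtain ⟨d, hdM, hvd⟩ := hd
  by_cases hc : ∃ c ∈ M, c ≠ x ∧ c ≠ y ∧ G.Adj v c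
  · obtain ⟨c, hcM, hcx, hcy, hvc⟩ := hc
    have hdx : d ≠ x := fun h => hvd (h ▸ hvx)
    have hdy : d ≠ y := fun h => hvd (h ▸ hvy)
    have hdc : d ≠ c := fun h => hvd (h ▸ hvc)
    exact k5e_aux hK5e hvd (fun h => hv (h ▸ hdM)) hvx hvy hvc
      (hMadj d hdM x hx hdx) (hMadj d hdM y hy hdy) (hMadj d hdM c hcM hdc)
      (hMadj x hx y hy hxy) (hMadj x hx c hcM hcx.symm) (hMadj y hy c hcM hcy.symm)
  · push_neg at hc
    have hsub0 : ({x, y} : Finset V) ⊆ M := by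
      intro w hw
      rcases Finset.mem_insert.1 hw with h | h
      · exact h ▸ hx
      · exact (Finset.mem_singleton.1 h) ▸ hy
    have hcard2 : ({x, y} : Finset V).card ≤ t + 3 := by
      have := Finset.card_insert_le x ({y} : Finset V)
      simp only [Finset.card_singleton] at this
      omega
    obtain ⟨s, hsub1, hsub2, hscard⟩ := Finset.exists_subsuperset_card_eq hsub0 hcard2
      (by rw [hM.2]; exact hw)
    refine ht_aux hHt s (hM.1.subset (by exact_mod_cast hsub2)) hscard
      (hsub1 (by simp)) (hsub1 (by simp)) hxy (fun h => hv (hsub2 h)) hvx hvy ?_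
    intro w hw hwx hwy
    exact hc w (hsub2 hw) hwx hwy

/-- Key lemma: if an outside vertex `q` is joined by an outside path to a neighbour of
`y ∈ M`, and `q` is not adjacent to `y`, then some neighbour of `q` is adjacent to `y`. -/
lemma k1 (hP5 : IsInducedFree G (pathGraph 5))
    (hMcl : G.IsClique (↑M : Set V)) (hM4 : 4 ≤ M.card)
    (hA : ∀ v ∉ M, ∀ x ∈ M, ∀ y ∈ M, G.Adj v x → G.Adj v y → x = y) :
    ∀ (n : ℕ) (q w y : V), q ∉ M → y ∈ M → ¬G.Adj q y → ChainO G M n q w →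
      G.Adj w y → ∃ u, u ∉ M ∧ G.Adj q u ∧ G.Adj u y := by
  have hMadj : ∀ x' ∈ M, ∀ y' ∈ M, x' ≠ y' → G.Adj x' y' := fun x' hx' y' hy' hne =>
    hMcl (Finset.mem_coe.mpr hx') (Finset.mem_coe.mpr hy') hne
  intro n
  induction n with
  | zero =>
    intro q w y hq hy hqy hch hwy
    exact absurd ((hch : q = w) ▸ hwy) hqy
  | succ n ih =>
    rintro q w y hq hy hqy ⟨s1, -, hs1, hadj, hch⟩ hwy
    by_cases hs1y : G.Adj s1 y
    · exact ⟨s1, hs1, hadj, hs1y⟩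
    · obtain ⟨u, hu, hs1u, huy⟩ := ih s1 w y hs1 hy hs1y hch hwy
      by_cases hqu : G.Adj q u
      · exact ⟨u, hu, hqu, huy⟩
      · exfalso
        obtain ⟨z, hz, hzy, hqz, hs1z⟩ := pick_z hA hM4 (y := y) hq hs1
        have huz : ¬G.Adj u z := fun h => hzy (hA u hu z hz y hy h huy)
        refine p5_aux hP5 hadj hs1u huy (hMadj y hy z hz (Ne.symm hzy)) hqu hqy hqz
          hs1y hs1z huz ?_ ?_ ?_ ?_ ?_ ?_
        · exact fun h => hqy (h ▸ huy)
        · exact fun h => hq (h ▸ hy)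
        · exact fun h => hq (h ▸ hz)
        · exact fun h => hs1 (h ▸ hy)
        · exact fun h => hs1 (h ▸ hz)
        · exact fun h => hu (h ▸ hz)

/-- If every outside vertex can reach (outside `M`) a neighbour of every vertex of `M`,
then every outside vertex has a neighbour in `M`. -/
lemma claim1 [Fintype V] (hP5 : IsInducedFree G (pathGraph 5))
    (hM : G.IsNClique G.cliqueNum M) (hM4 : 4 ≤ M.card)
    (hA : ∀ v ∉ M, ∀ x ∈ M, ∀ y ∈ M, G.Adj v x → G.Adj v y → x = y)
    (hfull : ∀ q ∉ M, ∀ x ∈ M, ∃ w, ReachO G M q w ∧ G.Adj w x) :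
    ∀ p ∉ M, ∃ x ∈ M, G.Adj p x := by
  classical
  have hMadj : ∀ x' ∈ M, ∀ y' ∈ M, x' ≠ y' → G.Adj x' y' := fun x' hx' y' hy' hne =>
    hM.1 (Finset.mem_coe.mpr hx') (Finset.mem_coe.mpr hy') hne
  intro p hp
  by_contra hnone
  push_neg at hnone
  have hstep : ∀ y, ∃ u, y ∈ M → (u ∉ M ∧ G.Adj p u ∧ G.Adj u y) := by
    intro y
    by_cases hy : y ∈ M
    · obtain ⟨w, hrw, hwy⟩ := hfull p hp y hy
      obtain ⟨n, hch⟩ := hrw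
      obtain ⟨u, h1, h2, h3⟩ := k1 hP5 hM.1 hM4 hA n p w y hp hy (hnone y hy) hch hwy
      exact ⟨u, fun _ => ⟨h1, h2, h3⟩⟩
    · exact ⟨p, fun h => absurd h hy⟩
  choose uf huf using hstep
  have hufM : ∀ y ∈ M, uf y ∉ M := fun y hy => (huf y hy).1
  have hufp : ∀ y ∈ M, G.Adj p (uf y) := fun y hy => (huf y hy).2.1
  have hufy : ∀ y ∈ M, G.Adj (uf y) y := fun y hy => (huf y hy).2.2
  -- pairwise adjacency of the `uf y`
  have hpair : ∀ y ∈ M, ∀ y' ∈ M, uf y ≠ uf y' → G.Adj (uf y) (uf y') := by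
    intro y hy y' hy' hne
    have hyy' : y ≠ y' := fun h => hne (h ▸ rfl)
    by_contra hnadj
    obtain ⟨z, hz, hzy, hzy', hpz⟩ := pick_z2 hA hM4 (y1 := y) (y2 := y') hp
    refine p5_aux hP5 (hufp y hy).symm (hufp y' hy') (hufy y' hy')
      (hMadj y' hy' z hz (Ne.symm hzy')) hnadj ?_ ?_ (hnone y' hy') hpz ?_
      hne ?_ ?_ ?_ ?_ ?_
    · exact fun h => hyy' (hA (uf y) (hufM y hy) y hy y' hy' (hufy y hy) h)
    · exact fun h => hzy (hA (uf y) (hufM y hy) z hz y hy h (hufy y hy))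
    · exact fun h => hzy' (hA (uf y') (hufM y' hy') z hz y' hy' h (hufy y' hy'))
    · exact fun h => (hufM y hy) (h ▸ hy')
    · exact fun h => (hufM y hy) (h ▸ hz)
    · exact fun h => hp (h ▸ hy')
    · exact fun h => hp (h ▸ hz)
    · exact fun h => (hufM y' hy') (h ▸ hz)
  -- the clique `insert p (M.image uf)` is too large
  have hpimg : p ∉ M.image uf := by
    intro h
    obtain ⟨y, hy, hyp⟩ := Finset.mem_image.1 h
    exact G.irrefl (hyp ▸ hufp y hy)
  have hinj : Set.InjOn uf ↑M := by
    intro y hy y' hy' h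
    exact hA (uf y) (hufM y hy) y hy y' hy'
      (hufy y hy) (h ▸ hufy y' (Finset.mem_coe.mp hy'))
  have hclique : G.IsClique ↑(insert p (M.image uf)) := by
    rw [Finset.coe_insert]
    refine SimpleGraph.IsClique.insert ?_ ?_
    · intro w1 h1 w2 h2 hne
      obtain ⟨y, hy, rfl⟩ := Finset.mem_image.1 (Finset.mem_coe.mp h1)
      obtain ⟨y', hy', rfl⟩ := Finset.mem_image.1 (Finset.mem_coe.mp h2)
      exact hpair y hy y' hy' hne
    · intro b hb hbp
      obtain ⟨y, hy, rfl⟩ := Finset.mem_image.1 (Finset.mem_coe.mp hb)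
      exact hufp y hy
  have hcard : (insert p (M.image uf)).card = G.cliqueNum + 1 := by
    rw [Finset.card_insert_of_notMem hpimg, Finset.card_image_of_injOn hinj, hM.2]
  have h2 := SimpleGraph.IsClique.card_le_cliqueNum (tc := hclique)
  omega

/-- No induced `P_3` outside `M`. -/
lemma claim2 [Fintype V] (hP5 : IsInducedFree G (pathGraph 5)) (hK5e : IsInducedFree G K5e)
    (hM : G.IsNClique G.cliqueNum M) (hM4 : 4 ≤ M.card)
    (hA : ∀ v ∉ M, ∀ x ∈ M, ∀ y ∈ M, G.Adj v x → G.Adj v y → x = y)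
    (hfull : ∀ q ∉ M, ∀ x ∈ M, ∃ w, ReachO G M q w ∧ G.Adj w x)
    {a q b : V} (haM : a ∉ M) (hqM : q ∉ M) (hbM : b ∉ M)
    (haq : G.Adj a q) (hqb : G.Adj q b) (hnab : ¬G.Adj a b) (hab : a ≠ b) : False := by
  classical
  have hMadj : ∀ x' ∈ M, ∀ y' ∈ M, x' ≠ y' → G.Adj x' y' := fun x' hx' y' hy' hne =>
    hM.1 (Finset.mem_coe.mpr hx') (Finset.mem_coe.mpr hy') hne
  obtain ⟨xa, hxaM, haxa⟩ := claim1 hP5 hM hM4 hA hfull a haM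
  obtain ⟨xb, hxbM, hbxb⟩ := claim1 hP5 hM hM4 hA hfull b hbM
  obtain ⟨xq, hxqM, hqxq⟩ := claim1 hP5 hM hM4 hA hfull q hqM
  have hk : ∀ y ∈ M, ¬G.Adj q y → ∃ u, u ∉ M ∧ G.Adj q u ∧ G.Adj u y := by
    intro y hy hqy
    obtain ⟨w, hrw, hwy⟩ := hfull q hqM y hy
    obtain ⟨n, hch⟩ := hrw
    exact k1 hP5 hM.1 hM4 hA n q w y hqM hy hqy hch hwy
  by_cases hca : xa ≠ xb ∧ xa ≠ xq
  · -- P5 : b q a xa z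
    obtain ⟨z, hz, hzxa, hbz, hqz⟩ := pick_z hA hM4 (y := xa) hbM hqM
    refine p5_aux hP5 hqb.symm haq.symm haxa (hMadj xa hxaM z hz (Ne.symm hzxa))
      (fun h => hnab h.symm) ?_ hbz ?_ hqz ?_ (fun h => hab h.symm) ?_ ?_ ?_ ?_ ?_
    · exact fun h => hca.1 (hA b hbM xa hxaM xb hxbM h hbxb)
    · exact fun h => hca.2 (hA q hqM xa hxaM xq hxqM h hqxq)
    · exact fun h => hzxa (hA a haM z hz xa hxaM h haxa)
    · exact fun h => hbM (h ▸ hxaM)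
    · exact fun h => hbM (h ▸ hz)
    · exact fun h => hqM (h ▸ hxaM)
    · exact fun h => hqM (h ▸ hz)
    · exact fun h => haM (h ▸ hz)
  · by_cases hcb : xb ≠ xa ∧ xb ≠ xq
    · -- P5 : a q b xb z
      obtain ⟨z, hz, hzxb, haz, hqz⟩ := pick_z hA hM4 (y := xb) haM hqM
      refine p5_aux hP5 haq hqb hbxb (hMadj xb hxbM z hz (Ne.symm hzxb))
        hnab ?_ haz ?_ hqz ?_ hab ?_ ?_ ?_ ?_ ?_
      · exact fun h => hcb.1 (hA a haM xb hxbM xa hxaM h haxa)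
      · exact fun h => hcb.2 (hA q hqM xb hxbM xq hxqM h hqxq)
      · exact fun h => hzxb (hA b hbM z hz xb hxbM h hbxb)
      · exact fun h => haM (h ▸ hxbM)
      · exact fun h => haM (h ▸ hz)
      · exact fun h => hqM (h ▸ hxbM)
      · exact fun h => hqM (h ▸ hz)
      · exact fun h => hbM (h ▸ hz)
    · -- now xa = xb
      have hxab : xa = xb := by
        by_contra hne
        push_neg at hca hcb
        exact hne ((hca hne).trans (hcb (Ne.symm hne)).symm)
      have hsub : ({xa, xq} : Finset V) ⊆ M := by
        intro w hw
        rcases Finset.mem_insert.1 hw with h | h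
        · exact h ▸ hxaM
        · exact (Finset.mem_singleton.1 h) ▸ hxqM
      have hcard2 : 2 ≤ (M \ ({xa, xq} : Finset V)).card := by
        rw [Finset.card_sdiff_of_subset hsub]
        have h1 := Finset.card_insert_le xa ({xq} : Finset V)
        simp only [Finset.card_singleton] at h1
        omega
      obtain ⟨y1, hy1, y2, hy2, hy12⟩ := Finset.one_lt_card.1 (show 1 < (M \ ({xa, xq} : Finset V)).card by omega)
      rw [Finset.mem_sdiff] at hy1 hy2
      have hy1M := hy1.1
      have hy2M := hy2.1
      have hy1xa : y1 ≠ xa := fun h => hy1.2 (by simp [h])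
      have hy1xq : y1 ≠ xq := fun h => hy1.2 (by simp [h])
      have hy2xa : y2 ≠ xa := fun h => hy2.2 (by simp [h])
      have hy2xq : y2 ≠ xq := fun h => hy2.2 (by simp [h])
      have hqy1 : ¬G.Adj q y1 := fun h => hy1xq (hA q hqM y1 hy1M xq hxqM h hqxq)
      have hqy2 : ¬G.Adj q y2 := fun h => hy2xq (hA q hqM y2 hy2M xq hxqM h hqxq)
      obtain ⟨u1, hu1M, hqu1, hu1y1⟩ := hk y1 hy1M hqy1
      obtain ⟨u2, hu2M, hqu2, hu2y2⟩ := hk y2 hy2M hqy2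
      have hay1 : ¬G.Adj a y1 := fun h => hy1xa (hA a haM y1 hy1M xa hxaM h haxa)
      have hay2 : ¬G.Adj a y2 := fun h => hy2xa (hA a haM y2 hy2M xa hxaM h haxa)
      have hby1 : ¬G.Adj b y1 := fun h => hy1xa (hxab ▸ hA b hbM y1 hy1M xb hxbM h hbxb)
      have hby2 : ¬G.Adj b y2 := fun h => hy2xa (hxab ▸ hA b hbM y2 hy2M xb hxbM h hbxb)
      -- each `u_i` is adjacent to both `a` and `b`
      have hcu : ∀ (c u y : V), c ∉ M → u ∉ M → y ∈ M → G.Adj c q → G.Adj u y →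
          ¬G.Adj c y → ¬G.Adj q y → G.Adj q u → G.Adj u c := by
        intro c u y hcM huM hyM hcq huy hcy hqy hqu
        by_contra hnuc
        obtain ⟨z, hz, hzy, hcz, hqz⟩ := pick_z hA hM4 (y := y) hcM hqM
        refine p5_aux hP5 hcq hqu huy (hMadj y hyM z hz (Ne.symm hzy))
          (fun h => hnuc h.symm) hcy hcz hqy hqz ?_ ?_ ?_ ?_ ?_ ?_ ?_
        · exact fun h => hzy (hA u huM z hz y hyM h huy)
        · exact fun h => hcy (h ▸ huy)
        · exact fun h => hcM (h ▸ hyM)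
        · exact fun h => hcM (h ▸ hz)
        · exact fun h => hqM (h ▸ hyM)
        · exact fun h => hqM (h ▸ hz)
        · exact fun h => huM (h ▸ hz)
      have hu1a : G.Adj u1 a := hcu a u1 y1 haM hu1M hy1M haq hu1y1 hay1 hqy1 hqu1
      have hu2a : G.Adj u2 a := hcu a u2 y2 haM hu2M hy2M haq hu2y2 hay2 hqy2 hqu2
      have hu1b : G.Adj u1 b := hcu b u1 y1 hbM hu1M hy1M hqb.symm hu1y1 hby1 hqy1 hqu1
      have hu2b : G.Adj u2 b := hcu b u2 y2 hbM hu2M hy2M hqb.symm hu2y2 hby2 hqy2 hqu2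
      -- u1 and u2 are adjacent
      have hnu1y2 : ¬G.Adj u1 y2 := fun h => hy12 (hA u1 hu1M y1 hy1M y2 hy2M hu1y1 h)
      have huu : G.Adj u1 u2 := by
        by_contra hnuu
        obtain ⟨z, hz, hzy1, hzy2, hqz⟩ := pick_z2 hA hM4 (y1 := y1) (y2 := y2) hqM
        refine p5_aux hP5 hqu1.symm hqu2 hu2y2 (hMadj y2 hy2M z hz (Ne.symm hzy2))
          hnuu hnu1y2 ?_ hqy2 hqz ?_ ?_ ?_ ?_ ?_ ?_ ?_
        · exact fun h => hzy1 (hA u1 hu1M z hz y1 hy1M h hu1y1)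
        · exact fun h => hzy2 (hA u2 hu2M z hz y2 hy2M h hu2y2)
        · exact fun h => hnu1y2 (h ▸ hu2y2)
        · exact fun h => hu1M (h ▸ hy2M)
        · exact fun h => hu1M (h ▸ hz)
        · exact fun h => hqM (h ▸ hy2M)
        · exact fun h => hqM (h ▸ hz)
        · exact fun h => hu2M (h ▸ hz)
      -- K5 minus the edge ab
      exact k5e_aux hK5e hnab hab haq hu1a.symm hu2a.symm hqb.symm hu1b.symm hu2b.symm
        hqu1 hqu2 huu

end MainLemmas

theorem stmt_11 {V : Type*} [Fintype V] (G : SimpleGraph V) (hconn : G.Connected)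
    (hP5 : IsInducedFree G (pathGraph 5)) (hK5e : IsInducedFree G K5e)
    (t : ℕ) (ht : 1 ≤ t) (hω : t + 3 ≤ G.cliqueNum)
    (hHt : IsInducedFree G (Hgraph t)) :
    IsCompBipartite G ∨ HasCliqueCutset G := by
  classical
  obtain ⟨M, hM⟩ := G.exists_isNClique_cliqueNum
  have hMcard : M.card = G.cliqueNum := hM.2
  have hM4 : 4 ≤ M.card := by omega
  have hA : ∀ v ∉ M, ∀ x ∈ M, ∀ y ∈ M, G.Adj v x → G.Adj v y → x = y :=
    lemA hK5e hHt hM hω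
  by_cases hfull : ∀ q ∉ M, ∀ x ∈ M, ∃ w, ReachO G M q w ∧ G.Adj w x
  · -- G is the complement of a bipartite graph
    left
    refine ⟨↑M, {v : V | v ∉ M}, ?_, hM.1, ?_⟩
    · ext v
      by_cases hv : v ∈ M <;> simp [hv]
    · intro u hu v hv huv
      simp only [Set.mem_setOf_eq] at hu hv
      by_contra hnadj
      -- first, u and v are connected outside M
      have hreach : ReachO G M u v := by
        by_contra hnr
        -- cross-component facts
        have hcross : ∀ s s', ReachO G M u s → ReachO G M v s' → s' ∉ M →
            ¬G.Adj s s' ∧ s ≠ s' := by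
          intro s s' hrs hrs' hs'M
          constructor
          · intro hadj
            exact hnr (reachO_trans (reachO_tail hu hrs hs'M hadj) (reachO_symm hrs'))
          · intro heq
            exact hnr (reachO_trans hrs (heq ▸ reachO_symm hrs'))
        -- two distinct vertices of M
        obtain ⟨x1, hx1, x2, hx2, hx12⟩ := Finset.one_lt_card.1
          (show 1 < M.card by omega)
        -- attachments from u's side
        obtain ⟨w1, hrw1, hw1x1⟩ := hfull u hu x1 hx1
        have hw1M : w1 ∉ M := reachO_out hu hrw1
        have hw1x2 : ¬G.Adj w1 x2 := fun h => hx12 (hA w1 hw1M x1 hx1 x2 hx2 hw1x1 h)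
        obtain ⟨w2, hrw2, hw2x2⟩ := hfull u hu x2 hx2
        obtain ⟨n1, hch1⟩ := reachO_trans (reachO_symm hrw1) hrw2
        obtain ⟨v1, hv1M, hw1v1, hv1x2⟩ :=
          k1 hP5 hM.1 hM4 hA n1 w1 w2 x2 hw1M hx2 hw1x2 hch1 hw2x2
        have hrv1 : ReachO G M u v1 := reachO_tail hu hrw1 hv1M hw1v1
        -- attachments from v's side
        obtain ⟨w1', hrw1', hw1'x1⟩ := hfull v hv x1 hx1
        have hw1'M : w1' ∉ M := reachO_out hv hrw1'
        have hw1'x2 : ¬G.Adj w1' x2 := fun h => hx12 (hA w1' hw1'M x1 hx1 x2 hx2 hw1'x1 h)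
        obtain ⟨w2', hrw2', hw2'x2⟩ := hfull v hv x2 hx2
        obtain ⟨n2, hch2⟩ := reachO_trans (reachO_symm hrw1') hrw2'
        obtain ⟨v1', hv1'M, hw1'v1', hv1'x2⟩ :=
          k1 hP5 hM.1 hM4 hA n2 w1' w2' x2 hw1'M hx2 hw1'x2 hch2 hw2'x2
        have hrv1' : ReachO G M v v1' := reachO_tail hv hrw1' hv1'M hw1'v1'
        -- the P5 : v1 w1 x1 w1' v1'
        have hMadj : ∀ x' ∈ M, ∀ y' ∈ M, x' ≠ y' → G.Adj x' y' :=
          fun x' hx' y' hy' hne =>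
            hM.1 (Finset.mem_coe.mpr hx') (Finset.mem_coe.mpr hy') hne
        obtain ⟨hc14, hd14⟩ := hcross v1 w1' hrv1 hrw1' hw1'M
        obtain ⟨hc15, hd15⟩ := hcross v1 v1' hrv1 hrv1' hv1'M
        obtain ⟨hc24, hd24⟩ := hcross w1 w1' hrw1 hrw1' hw1'M
        obtain ⟨hc25, hd25⟩ := hcross w1 v1' hrw1 hrv1' hv1'M
        refine p5_aux hP5 hw1v1.symm hw1x1 hw1'x1.symm hw1'v1'
          ?_ hc14 hc15 hc24 hc25 ?_ ?_ hd14 hd15 hd24 hd25 ?_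
        · exact fun h => hx12 (hA v1 hv1M x1 hx1 x2 hx2 h hv1x2)
        · exact fun h => hx12 (hA v1' hv1'M x1 hx1 x2 hx2 h.symm hv1'x2)
        · exact fun h => hv1M (h ▸ hx1)
        · exact fun h => hv1'M (h.symm ▸ hx1)
      -- extract an induced P3 and contradict claim2
      obtain ⟨n, hch⟩ := hreach
      obtain ⟨a, p, c, haM, hpM, hcM, hap, hpc, hnac, hac⟩ :=
        extractP3 n u v hch hv huv hnadj
      exact (claim2 hP5 hK5e hM hM4 hA hfull haM hpM hcM hap hpc hnac hac).elim
  · -- G has a clique cut-set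
    right
    push_neg at hfull
    obtain ⟨q, hq, x, hx, hnx⟩ := hfull
    refine ⟨{z : V | z ∈ M ∧ ∃ w, ReachO G M q w ∧ G.Adj w z},
      {w : V | ReachO G M q w},
      Set.univ \ ({z : V | z ∈ M ∧ ∃ w, ReachO G M q w ∧ G.Adj w z} ∪
        {w : V | ReachO G M q w}), ?_, ?_, ?_, ?_, ?_, ?_, ?_, ?_⟩
    · exact hM.1.subset (fun z hz => Finset.mem_coe.mpr hz.1)
    · exact ⟨q, reachO_refl q⟩
    · refine ⟨x, Set.mem_diff_of_mem (Set.mem_univ x) ?_⟩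
      intro hmem
      rcases hmem with h | h
      · obtain ⟨-, w, hrw, hwx⟩ := h
        exact hnx w hrw hwx
      · exact (reachO_out hq h) hx
    · exact Set.disjoint_sdiff_right.mono_left (Set.subset_union_right)
    · intro S hS1 hS2 z hz
      have h1 := hS1 hz
      have h2 := hS2 hz
      exact absurd (reachO_out hq h2) (by simp [h1.1])
    · exact Set.disjoint_sdiff_right.mono_left (Set.subset_union_left)
    · ext z
      constructor
      · intro _; trivial
      · intro _
        by_cases hzK : z ∈ {z : V | z ∈ M ∧ ∃ w, ReachO G M q w ∧ G.Adj w z}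
        · exact Or.inl (Or.inl hzK)
        · by_cases hzA : z ∈ {w : V | ReachO G M q w}
          · exact Or.inl (Or.inr hzA)
          · refine Or.inr ⟨trivial, ?_⟩
            intro h
            rcases h with h | h
            · exact hzK h
            · exact hzA h
    · intro s hs c hc hadj
      simp only [Set.mem_setOf_eq] at hs
      rcases hc with ⟨-, hc⟩
      simp only [Set.mem_union, Set.mem_setOf_eq, not_or] at hc
      by_cases hcM : c ∈ M
      · exact hc.1 ⟨hcM, s, hs, hadj⟩
      · exact hc.2 (reachO_tail hq hs hcM hadj)
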